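/- Let W = (𝒫, n) be a well-defined Wilson loop diagram and let M be its matroid M(W). For every subset of propagators P ⊆ 𝒫, the set F(P) ∪ F₀ is a flat of M, where F(P) = V_P ∖ V_{𝒫∖P} and F₀ = Fin n ∖ V_𝒫. -/

import Mathlib

open Matroid Set

/-- The support of a propagator: its two endpoints and their cyclic successors. -/
def Vp (n : ℕ) [NeZero n] (p : Fin n × Fin n) : Set (Fin n) :=
  {p.1, p.1 + 1, p.2, p.2 + 1}

/-- The support of a set of propagators. -/
def VP (n : ℕ) [NeZero n] (P : Set (Fin n × Fin n)) : Set (Fin n) :=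
  ⋃ p ∈ P, Vp n p

/-- `propsOf n Ps S` is `Prop(S)`: the propagators of `Ps` whose support meets `S`. -/
def propsOf (n : ℕ) [NeZero n] (Ps : Set (Fin n × Fin n)) (S : Set (Fin n)) :
    Set (Fin n × Fin n) :=
  {p ∈ Ps | (Vp n p ∩ S).Nonempty}

/-- A Wilson loop diagram `(Ps, n)` is well defined if `|V_P| ≥ |P| + 3`
for every nonempty `P ⊆ Ps`. -/
def WellDefinedWLD (n : ℕ) [NeZero n] (Ps : Set (Fin n × Fin n)) : Prop :=
  ∀ P ⊆ Ps, P.Nonempty → P.ncard + 3 ≤ (VP n P).ncard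
/-- A circuit of a matroid: a minimal dependent set. -/
def Matroid.IsCircuitOf {α : Type*} (M : Matroid α) (C : Set α) : Prop :=
  M.Dep C ∧ ∀ D ⊂ C, ¬ M.Dep D

/-- A union of circuits (a cyclic set) of a matroid. -/
def Matroid.UnionOfCircuits {α : Type*} (M : Matroid α) (C : Set α) : Prop :=
  ∃ 𝒞 : Set (Set α), (∀ D ∈ 𝒞, M.IsCircuitOf D) ∧ C = ⋃₀ 𝒞

/-- A matroid is connected if its ground set is nonempty and any two elements of the
ground set are equal or lie on a common circuit. -/
def Matroid.Conn {α : Type*} (M : Matroid α) : Prop :=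
  M.E.Nonempty ∧ ∀ x ∈ M.E, ∀ y ∈ M.E, x = y ∨ ∃ C, M.IsCircuitOf C ∧ x ∈ C ∧ y ∈ C

/-- The rank of a set in a matroid: the maximal size of an independent subset. -/
noncomputable def Matroid.rk' {α : Type*} (M : Matroid α) (X : Set α) : ℕ :=
  sSup (Set.ncard '' {I | M.Indep I ∧ I ⊆ X})

/-- Contraction of a matroid by a set, defined via duality. -/
def Matroid.contractBy {α : Type*} (M : Matroid α) (C : Set α) : Matroid α :=
  (M✶ ↾ (M.E \ C))✶

/-- The propagator flat `F(P)`: vertices supporting only propagators in `P`. -/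
def FP (n : ℕ) [NeZero n] (Ps P : Set (Fin n × Fin n)) : Set (Fin n) :=
  VP n P \ VP n (Ps \ P)

/-- In the matroid `M(W)` of a well-defined Wilson loop diagram, for
every set of propagators `P ⊆ Ps` the set `F(P) ∪ F₀` is a flat, where
`F(P) = V_P \ V_{Ps \ P}` and `F₀ = Fin n \ V_Ps`. -/
theorem propagator_flat_is_flat (n : ℕ) [NeZero n]
    (Ps : Set (Fin n × Fin n)) (hW : WellDefinedWLD n Ps)
    (M : Matroid (Fin n)) (hME : M.E = Set.univ)
    (hMI : ∀ S : Set (Fin n), M.Indep S ↔ ∀ U ⊆ S, U.ncard ≤ (propsOf n Ps U).ncard)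
    (P : Set (Fin n × Fin n)) (hP : P ⊆ Ps) :
    M.IsFlat (FP n Ps P ∪ (Set.univ \ VP n Ps)) := by
  set Q : Set (Fin n × Fin n) := Ps \ P with hQ
  have hVPs : VP n Ps = VP n P ∪ VP n Q := by
    rw [hQ]
    unfold VP
    rw [← Set.biUnion_union, Set.union_diff_cancel hP]
  have hFeq : FP n Ps P ∪ (Set.univ \ VP n Ps) = Set.univ \ VP n Q := by
    rw [hVPs]
    unfold FP
    ext x
    simp only [Set.mem_union, Set.mem_diff, Set.mem_univ, true_and]
    tauto
  rw [hFeq]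
  -- key lemma: inserting an element of VP n Q into an independent subset of its
  -- complement preserves independence
  have key : ∀ I : Set (Fin n), M.Indep I → I ⊆ Set.univ \ VP n Q →
      ∀ e ∈ VP n Q, M.Indep (insert e I) := by
    intro I hI hIF e he
    rw [hMI] at hI ⊢
    intro U hU
    by_cases heU : e ∈ U
    · -- U = insert e (U \ {e})
      obtain ⟨q, hqQ, heq⟩ : ∃ q ∈ Q, e ∈ Vp n q := by
        simpa [VP, Set.mem_iUnion] using he
      have heI : e ∉ I := fun h => (hIF h).2 he
      set U' := U \ {e} with hU'
      have hU'I : U' ⊆ I := by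
        intro x hx
        rcases hU hx.1 with h | h
        · exact absurd h hx.2
        · exact h
      have hUfin : U.Finite := Set.toFinite U
      have hUcard : U.ncard = U'.ncard + 1 := by
        have : U = insert e U' := by
          ext x; by_cases hx : x = e <;> simp [hU', hx, heU]
        rw [this, Set.ncard_insert_of_notMem (by simp [hU']) (Set.toFinite _)]
      have hqU : q ∈ propsOf n Ps U :=
        ⟨hqQ.1, ⟨e, heq, heU⟩⟩
      have hqU' : q ∉ propsOf n Ps U' := by
        rintro ⟨-, x, hxq, hxU'⟩
        have hxI := hU'I hxU'
        exact (hIF hxI).2 (Set.mem_biUnion hqQ hxq)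
      have hsub : insert q (propsOf n Ps U') ⊆ propsOf n Ps U := by
        rintro p (rfl | hp)
        · exact hqU
        · exact ⟨hp.1, hp.2.imp fun x hx => ⟨hx.1, hx.2.1⟩⟩
      calc U.ncard = U'.ncard + 1 := hUcard
        _ ≤ (propsOf n Ps U').ncard + 1 := by
            have := hI U' hU'I; omega
        _ = (insert q (propsOf n Ps U')).ncard :=
            (Set.ncard_insert_of_notMem hqU' (Set.toFinite _)).symm
        _ ≤ (propsOf n Ps U).ncard := Set.ncard_le_ncard hsub (Set.toFinite _)
    · exact hI U fun x hx => ((hU hx).resolve_left (fun h => heU (h ▸ hx)))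
  constructor
  · intro I X hIF hIX x hxX
    by_contra hxF
    have hxQ : x ∈ VP n Q := by
      by_contra h
      exact hxF ⟨Set.mem_univ x, h⟩
    have hxI : x ∉ I := fun h => hxF (hIF.subset h)
    have : M.Dep (insert x I) := hIX.insert_dep ⟨hxX, hxI⟩
    exact this.1 (key I hIF.indep hIF.subset x hxQ)
  · rw [hME]; exact Set.subset_univ _
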